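/- Let M₁, M₂ be matroids on ground set V and let Y, P ∈ M₁ ∩ M₂ be common independent sets with |Y| ≤ |P|. Then there exist pairwise disjoint subsets X₁, ..., X_{|P|-|Y|} of Y ∪ P such that for each i, Y △ X_i is independent in both matroids and |Y △ X_i| = |Y| + 1. -/

import Mathlib

open Finset
open scoped Classical

set_option linter.unusedSectionVars false

namespace Stmt14Aux

variable {α : Type*} [DecidableEq α]

section OneMatroid

variable (Ind : Finset α → Prop)

/-- rank: size of largest independent subset -/
noncomputable def rk (A : Finset α) : ℕ :=
  (A.powerset.filter Ind).sup Finset.card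

variable {Ind}
variable (h_empty : Ind ∅)
    (h_down : ∀ ⦃A B : Finset α⦄, A ⊆ B → Ind B → Ind A)
    (h_aug : ∀ ⦃A B : Finset α⦄, Ind A → Ind B → A.card < B.card →
      ∃ e ∈ B \ A, Ind (insert e A))

include h_empty in
lemma exists_rk_witness (A : Finset α) :
    ∃ B ⊆ A, Ind B ∧ B.card = rk Ind A := by
  have hne : (A.powerset.filter Ind).Nonempty := ⟨∅, by simp [h_empty]⟩
  obtain ⟨B, hB, hBeq⟩ := Finset.exists_mem_eq_sup _ hne Finset.card
  simp only [mem_filter, mem_powerset] at hB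
  exact ⟨B, hB.1, hB.2, hBeq.symm⟩

lemma le_rk_of_indep {A B : Finset α} (hBA : B ⊆ A) (hB : Ind B) :
    B.card ≤ rk Ind A :=
  Finset.le_sup (by simp [hBA, hB])

lemma rk_mono {A B : Finset α} (h : A ⊆ B) : rk Ind A ≤ rk Ind B := by
  apply Finset.sup_mono
  intro C hC
  simp only [mem_filter, mem_powerset] at hC ⊢
  exact ⟨hC.1.trans h, hC.2⟩

include h_empty in
lemma rk_le_card (A : Finset α) : rk Ind A ≤ A.card := by
  obtain ⟨B, hBA, _, hBc⟩ := exists_rk_witness h_empty (Ind := Ind) A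
  rw [← hBc]; exact Finset.card_le_card hBA

include h_empty in
lemma indep_iff_rk_eq_card {A : Finset α} : Ind A ↔ rk Ind A = A.card := by
  constructor
  · intro h
    exact le_antisymm (rk_le_card h_empty A) (le_rk_of_indep (le_refl A) h)
  · intro h
    obtain ⟨B, hBA, hBi, hBc⟩ := exists_rk_witness h_empty (Ind := Ind) A
    have : B = A := Finset.eq_of_subset_of_card_le hBA (by omega)
    rwa [this] at hBi

include h_empty h_aug in
/-- a maximal independent subset is maximum -/
lemma rk_of_maximal {A B : Finset α} (hBA : B ⊆ A) (hB : Ind B)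
    (hmax : ∀ e ∈ A, e ∉ B → ¬ Ind (insert e B)) : rk Ind A = B.card := by
  refine le_antisymm ?_ (le_rk_of_indep hBA hB)
  by_contra h
  push_neg at h
  obtain ⟨C, hCA, hCi, hCc⟩ := exists_rk_witness h_empty (Ind := Ind) A
  have : B.card < C.card := by omega
  obtain ⟨e, he, hei⟩ := h_aug hB hCi this
  simp only [mem_sdiff] at he
  exact hmax e (hCA he.1) he.2 hei

lemma exists_maximal_superset {A B : Finset α} (hBA : B ⊆ A) (hB : Ind B) :
    ∃ B', B ⊆ B' ∧ B' ⊆ A ∧ Ind B' ∧ ∀ e ∈ A, e ∉ B' → ¬ Ind (insert e B') := by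
  by_cases h : ∃ e ∈ A, e ∉ B ∧ Ind (insert e B)
  · obtain ⟨e, heA, heB, hei⟩ := h
    have hcard : A.card - (insert e B).card < A.card - B.card := by
      have h1 : (insert e B).card = B.card + 1 := Finset.card_insert_of_notMem heB
      have h2 : (insert e B).card ≤ A.card := Finset.card_le_card (Finset.insert_subset heA hBA)
      omega
    obtain ⟨B', h1, h2, h3, h4⟩ := exists_maximal_superset (Finset.insert_subset heA hBA) hei
    exact ⟨B', (Finset.subset_insert e B).trans h1, h2, h3, h4⟩
  · push_neg at h
    exact ⟨B, le_refl B, hBA, hB, h⟩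
termination_by A.card - B.card

include h_empty h_down h_aug in
lemma rk_insert_le (A : Finset α) (e : α) : rk Ind (insert e A) ≤ rk Ind A + 1 := by
  obtain ⟨B, hBA, hBi, hBc⟩ := exists_rk_witness h_empty (Ind := Ind) (insert e A)
  have hsub : B.erase e ⊆ A := by
    intro x hx
    simp only [mem_erase] at hx
    rcases Finset.mem_insert.mp (hBA hx.2) with h | h
    · exact absurd h hx.1
    · exact h
  have h2 : Ind (B.erase e) := h_down (Finset.erase_subset e B) hBi
  have h3 := le_rk_of_indep hsub h2
  by_cases he : e ∈ B
  · have := Finset.card_erase_add_one he; omega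
  · rw [Finset.erase_eq_of_notMem he] at h3; omega

variable (Ind) in
/-- `e` is in the closure (span) of `A` -/
noncomputable def inCl (A : Finset α) (e : α) : Prop :=
  rk Ind (insert e A) = rk Ind A

lemma inCl_of_mem {A : Finset α} {e : α} (h : e ∈ A) : inCl Ind A e := by
  rw [inCl, Finset.insert_eq_self.mpr h]

include h_empty in
lemma inCl_of_dep {B : Finset α} {t : α} (hB : Ind B) (ht : t ∉ B)
    (hdep : ¬ Ind (insert t B)) : inCl Ind B t := by
  have hrB : rk Ind B = B.card := (indep_iff_rk_eq_card h_empty).mp hB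
  have h1 : rk Ind B ≤ rk Ind (insert t B) := rk_mono (Finset.subset_insert t B)
  have h2 : rk Ind (insert t B) ≤ (insert t B).card := rk_le_card h_empty _
  have hcd : (insert t B).card = B.card + 1 := Finset.card_insert_of_notMem ht
  rw [inCl, hrB]
  rcases Nat.lt_or_ge (rk Ind (insert t B)) (B.card + 1) with h | h
  · omega
  · exfalso
    apply hdep
    rw [indep_iff_rk_eq_card h_empty]
    omega

include h_empty in
lemma not_indep_of_inCl {B : Finset α} {t : α} (hB : Ind B) (ht : t ∉ B)
    (hcl : inCl Ind B t) : ¬ Ind (insert t B) := by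
  intro h
  rw [indep_iff_rk_eq_card h_empty] at h
  rw [inCl, h, Finset.card_insert_of_notMem ht,
    ← (indep_iff_rk_eq_card h_empty).mp hB] at hcl
  omega

include h_empty h_down h_aug in
/-- monotonicity of spanning: if `e ∈ cl A` and `A ⊆ A'` then `e ∈ cl A'`. -/
lemma inCl_mono {A A' : Finset α} {e : α} (hcl : inCl Ind A e) (hAA : A ⊆ A') :
    inCl Ind A' e := by
  by_cases heA : e ∈ A'
  · exact inCl_of_mem heA
  obtain ⟨B0, hB0A, hB0i, hB0c⟩ := exists_rk_witness h_empty (Ind := Ind) A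
  obtain ⟨B', hBB', hB'A, hB'i, hB'max⟩ :=
    exists_maximal_superset (hB0A.trans hAA) hB0i
  have hrkA' : rk Ind A' = B'.card := rk_of_maximal h_empty h_aug hB'A hB'i hB'max
  have heB' : e ∉ B' := fun h => heA (hB'A h)
  have hkey : ¬ Ind (insert e B') := by
    intro hind
    have h1 : Ind (insert e B0) := h_down (Finset.insert_subset_insert e hBB') hind
    have h2 : e ∉ B0 := fun h => heA (hAA (hB0A h))
    have h3 : insert e B0 ⊆ insert e A := Finset.insert_subset_insert e hB0A
    have := le_rk_of_indep h3 h1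
    rw [Finset.card_insert_of_notMem h2] at this
    rw [inCl] at hcl
    omega
  rw [inCl, hrkA']
  apply rk_of_maximal h_empty h_aug (hB'A.trans (Finset.subset_insert e A')) hB'i
  intro f hf hfB'
  rcases Finset.mem_insert.mp hf with h | h
  · subst h; exact hkey
  · exact hB'max f h hfB' 

include h_empty h_down h_aug in
lemma rk_union_eq_of_inCl {A B : Finset α} (h : ∀ b ∈ B, inCl Ind A b) :
    rk Ind (A ∪ B) = rk Ind A := by
  induction B using Finset.induction_on with
  | empty => rw [Finset.union_empty]
  | @insert b B hb ih =>
    have h1 : A ∪ insert b B = insert b (A ∪ B) := Finset.union_insert b A B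
    have h2 : inCl Ind (A ∪ B) b :=
      inCl_mono h_empty h_down h_aug (h b (Finset.mem_insert_self b B)) Finset.subset_union_left
    rw [h1, inCl] at *
    rw [h2, ih (fun x hx => h x (Finset.mem_insert_of_mem hx))]

include h_empty h_down h_aug in
/-- transitivity-style lemma: if `B ⊆ cl A` and `e ∈ cl (A ∪ B)` then `e ∈ cl A`. -/
lemma inCl_trans {A B : Finset α} {e : α} (h : ∀ b ∈ B, inCl Ind A b)
    (he : inCl Ind (A ∪ B) e) : inCl Ind A e := by
  have h1 : rk Ind (A ∪ B) = rk Ind A := rk_union_eq_of_inCl h_empty h_down h_aug h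
  have h2 : rk Ind A ≤ rk Ind (insert e A) := rk_mono (Finset.subset_insert e A)
  have h3 : rk Ind (insert e A) ≤ rk Ind (insert e (A ∪ B)) :=
    rk_mono (Finset.insert_subset_insert e Finset.subset_union_left)
  rw [inCl] at he ⊢
  omega

include h_empty h_down h_aug in
/-- exchange: if `e ∈ cl (insert f U)` but `e ∉ cl U` then `f ∈ cl (insert e U)`. -/
lemma inCl_exchange {U : Finset α} {e f : α} (h1 : inCl Ind (insert f U) e)
    (h2 : ¬ inCl Ind U e) : inCl Ind (insert e U) f := by
  have ha : rk Ind (insert e U) = rk Ind U + 1 := by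
    have := rk_insert_le h_empty h_down h_aug U e
    have := rk_mono (Ind := Ind) (Finset.subset_insert e U)
    rw [inCl] at h2
    omega
  have hb : rk Ind (insert f U) ≤ rk Ind U + 1 := rk_insert_le h_empty h_down h_aug U f
  have hc : rk Ind (insert e (insert f U)) = rk Ind (insert f U) := h1
  have hd : rk Ind (insert e U) ≤ rk Ind (insert e (insert f U)) :=
    rk_mono (Finset.insert_subset_insert e (Finset.subset_insert f U))
  have he' : insert f (insert e U) = insert e (insert f U) := Finset.insert_comm f e U
  rw [inCl, he', hc, ha]
  omega

include h_empty h_down h_aug in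
/-- Core exchange theorem: given a "triangular" system of exchanges, the
    simultaneous exchange is independent. -/
lemma exc (m : ℕ) : ∀ (I : Finset α) (s t : ℕ → α), Ind I →
    (∀ i, 1 ≤ i → i ≤ m → s i ∈ I) →
    (∀ i, 1 ≤ i → i ≤ m → t i ∉ I) →
    (∀ i j, 1 ≤ i → i ≤ m → 1 ≤ j → j ≤ m → s i = s j → i = j) →
    (∀ i j, 1 ≤ i → i ≤ m → 1 ≤ j → j ≤ m → t i = t j → i = j) →
    (∀ j, 1 ≤ j → j ≤ m → ¬ Ind (insert (t j) I)) →
    (∀ j, 1 ≤ j → j ≤ m → Ind (insert (t j) (I.erase (s j)))) →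
    (∀ i j, 1 ≤ i → i < j → j ≤ m → ¬ Ind (insert (t j) (I.erase (s i)))) →
    ∀ Z : Finset α,
      (∀ x, x ∈ Z ↔ ((x ∈ I ∧ ¬ ∃ i, 1 ≤ i ∧ i ≤ m ∧ x = s i)
        ∨ (∃ i, 1 ≤ i ∧ i ≤ m ∧ x = t i))) →
      Ind Z := by
  induction m with
  | zero =>
    intro I s t hI _ _ _ _ _ _ _ Z hZ
    have : Z = I := by
      ext x
      rw [hZ x]
      constructor
      · rintro (⟨h, _⟩ | ⟨i, h1, h2, _⟩)
        · exact h
        · omega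
      · intro h
        exact Or.inl ⟨h, by rintro ⟨i, h1, h2, _⟩; omega⟩
    rwa [this]
  | succ m ih =>
    intro I s t hI hs ht hsinj htinj H1 H2 H3 Z hZ
    -- basic distinctness facts
    have hst : ∀ i j, 1 ≤ i → i ≤ m + 1 → 1 ≤ j → j ≤ m + 1 → s i ≠ t j := by
      intro i j hi1 hi2 hj1 hj2 h
      exact ht j hj1 hj2 (h ▸ hs i hi1 hi2)
    set I₁ : Finset α := insert (t 1) (I.erase (s 1)) with hI₁def
    have hs1I : s 1 ∈ I := hs 1 le_rfl (by omega)
    have ht1I : t 1 ∉ I := ht 1 le_rfl (by omega)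
    have hI₁ : Ind I₁ := H2 1 le_rfl (by omega)
    have hIerase : Ind (I.erase (s 1)) := h_down (Finset.erase_subset _ _) hI
    -- new H2
    have H2' : ∀ j, 1 ≤ j → j ≤ m → Ind (insert (t (j+1)) (I₁.erase (s (j+1)))) := by
      intro j hj1 hj2
      have hj'1 : (1:ℕ) ≤ j + 1 := by omega
      have hj'2 : j + 1 ≤ m + 1 := by omega
      have hne1 : s (j+1) ≠ s 1 := by
        intro h; have := hsinj (j+1) 1 hj'1 hj'2 le_rfl (by omega) h; omega
      have hne2 : t (j+1) ≠ t 1 := by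
        intro h; have := htinj (j+1) 1 hj'1 hj'2 le_rfl (by omega) h; omega
      set X : Finset α := (I.erase (s 1)).erase (s (j+1)) with hXdef
      set B : Finset α := insert (t (j+1)) X with hBdef
      have hBi : Ind B := by
        apply h_down _ (H2 (j+1) hj'1 hj'2)
        apply Finset.insert_subset_insert
        intro x hx
        simp only [hXdef, Finset.mem_erase] at hx ⊢
        exact ⟨hx.1, hx.2.2⟩
      have h5 : t 1 ≠ s (j+1) := (hst (j+1) 1 hj'1 hj'2 le_rfl (by omega)).symm
      have hgoal_eq : insert (t (j+1)) (I₁.erase (s (j+1))) = insert (t 1) B := by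
        rw [hBdef, hXdef, hI₁def]
        ext x
        simp only [Finset.mem_insert, Finset.mem_erase]
        constructor
        · rintro (h | h) <;> tauto
        · rintro (h | h | h) <;> first
          | (subst h; tauto)
          | tauto
      rw [hgoal_eq]
      by_contra hdep
      have ht1B : t 1 ∉ B := by
        simp only [hBdef, hXdef, Finset.mem_insert, Finset.mem_erase]
        push_neg
        exact ⟨fun h => hne2 h.symm, fun _ _ h => ht1I h⟩
      have hclB : inCl Ind B (t 1) := inCl_of_dep h_empty hBi ht1B hdep
      have hcl1 : ∀ b ∈ B, inCl Ind (I.erase (s 1)) b := by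
        intro b hb
        rcases Finset.mem_insert.mp hb with h | h
        · subst h
          apply inCl_of_dep h_empty hIerase
          · intro hmem
            exact ht (j+1) hj'1 hj'2 (Finset.mem_of_mem_erase hmem)
          · exact H3 1 (j+1) le_rfl (by omega) hj'2
        · exact inCl_of_mem (Finset.mem_of_mem_erase h)
      have hcl2 : inCl Ind ((I.erase (s 1)) ∪ B) (t 1) :=
        inCl_mono h_empty h_down h_aug hclB Finset.subset_union_right
      have hcl3 : inCl Ind (I.erase (s 1)) (t 1) :=
        inCl_trans h_empty h_down h_aug hcl1 hcl2
      have : ¬ Ind (insert (t 1) (I.erase (s 1))) := by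
        apply not_indep_of_inCl h_empty hIerase _ hcl3
        intro hmem
        exact ht1I (Finset.mem_of_mem_erase hmem)
      exact this hI₁
    -- new H1
    have H1' : ∀ j, 1 ≤ j → j ≤ m → ¬ Ind (insert (t (j+1)) I₁) := by
      intro j hj1 hj2 hind
      apply H3 1 (j+1) le_rfl (by omega) (by omega)
      apply h_down _ hind
      exact Finset.insert_subset_insert _ (Finset.subset_insert _ _)
    -- new H3
    have H3' : ∀ i j, 1 ≤ i → i < j → j ≤ m →
        ¬ Ind (insert (t (j+1)) (I₁.erase (s (i+1)))) := by
      intro i j hi1 hij hjm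
      have hi'1 : (1:ℕ) ≤ i + 1 := by omega
      have hi'2 : i + 1 ≤ m + 1 := by omega
      have hj'1 : (1:ℕ) ≤ j + 1 := by omega
      have hj'2 : j + 1 ≤ m + 1 := by omega
      have hsne : s (i+1) ≠ s 1 := fun h => by
        have := hsinj (i+1) 1 hi'1 hi'2 le_rfl (by omega) h; omega
      have htne : t (j+1) ≠ t 1 := fun h => by
        have := htinj (j+1) 1 hj'1 hj'2 le_rfl (by omega) h; omega
      have h5 : t 1 ≠ s (i+1) := (hst (i+1) 1 hi'1 hi'2 le_rfl (by omega)).symm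
      set U : Finset α := (I.erase (s 1)).erase (s (i+1)) with hUdef
      have hUI : U ⊆ I := (Finset.erase_subset _ _).trans (Finset.erase_subset _ _)
      have hUind : Ind U := h_down hUI hI
      have hB'ind : Ind (insert (t 1) U) := by
        apply h_down _ hI₁
        exact Finset.insert_subset_insert _ (Finset.erase_subset _ _)
      have hgoal_eq : insert (t (j+1)) (I₁.erase (s (i+1)))
          = insert (t (j+1)) (insert (t 1) U) := by
        rw [hI₁def, hUdef]
        ext x
        simp only [Finset.mem_insert, Finset.mem_erase]
        constructor
        · rintro (h | h) <;> tauto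
        · rintro (h | h | h)
          · tauto
          · subst h; exact Or.inr ⟨h5, Or.inl rfl⟩
          · tauto
      rw [hgoal_eq]
      have htjI : t (j+1) ∉ I := ht _ hj'1 hj'2
      have htjB' : t (j+1) ∉ insert (t 1) U := by
        simp only [Finset.mem_insert]
        push_neg
        exact ⟨htne, fun h => htjI (hUI h)⟩
      apply not_indep_of_inCl h_empty hB'ind htjB'
      by_cases hU : inCl Ind U (t (j+1))
      · exact inCl_mono h_empty h_down h_aug hU (Finset.subset_insert _ _)
      · have heq1 : insert (s 1) U = I.erase (s (i+1)) := by
          rw [hUdef]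
          ext x
          simp only [Finset.mem_insert, Finset.mem_erase]
          constructor
          · rintro (h | h)
            · subst h; exact ⟨hsne.symm, hs1I⟩
            · exact ⟨h.1, h.2.2⟩
          · intro h
            by_cases hx : x = s 1
            · exact Or.inl hx
            · exact Or.inr ⟨h.1, hx, h.2⟩
        have hsi1I : s (i+1) ∈ I := hs _ hi'1 hi'2
        have heq2 : insert (s (i+1)) U = I.erase (s 1) := by
          rw [hUdef]
          ext x
          simp only [Finset.mem_insert, Finset.mem_erase]
          constructor
          · rintro (h | h)
            · subst h; exact ⟨hsne, hsi1I⟩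
            · exact ⟨h.2.1, h.2.2⟩
          · intro h
            by_cases hx : x = s (i+1)
            · exact Or.inl hx
            · exact Or.inr ⟨hx, h.1, h.2⟩
        have hIe1 : Ind (I.erase (s (i+1))) := h_down (Finset.erase_subset _ _) hI
        have e1 : inCl Ind (I.erase (s (i+1))) (t (j+1)) :=
          inCl_of_dep h_empty hIe1 (fun h => htjI (Finset.mem_of_mem_erase h))
            (H3 (i+1) (j+1) hi'1 (by omega) hj'2)
        have e2 : inCl Ind (I.erase (s 1)) (t (j+1)) :=
          inCl_of_dep h_empty hIerase (fun h => htjI (Finset.mem_of_mem_erase h))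
            (H3 1 (j+1) le_rfl (by omega) hj'2)
        rw [← heq1] at e1
        rw [← heq2] at e2
        have x1 : inCl Ind (insert (t (j+1)) U) (s 1) :=
          inCl_exchange h_empty h_down h_aug e1 hU
        have x2 : inCl Ind (insert (t (j+1)) U) (s (i+1)) :=
          inCl_exchange h_empty h_down h_aug e2 hU
        have hIcl : ∀ b ∈ I, inCl Ind (insert (t (j+1)) U) b := by
          intro b hb
          by_cases hb1 : b = s 1
          · exact hb1 ▸ x1
          by_cases hb2 : b = s (i+1)
          · exact hb2 ▸ x2
          · apply inCl_of_mem
            apply Finset.mem_insert_of_mem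
            rw [hUdef]
            exact Finset.mem_erase.mpr ⟨hb2, Finset.mem_erase.mpr ⟨hb1, hb⟩⟩
        have ht1cl : inCl Ind I (t 1) :=
          inCl_of_dep h_empty hI ht1I (H1 1 le_rfl (by omega))
        have ht1V : inCl Ind (insert (t (j+1)) U) (t 1) := by
          apply inCl_trans h_empty h_down h_aug hIcl
          exact inCl_mono h_empty h_down h_aug ht1cl Finset.subset_union_right
        have ht1U : ¬ inCl Ind U (t 1) := by
          intro h
          have ht1nU : t 1 ∉ U := fun hh => ht1I (hUI hh)
          exact not_indep_of_inCl h_empty hUind ht1nU h hB'ind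
        exact inCl_exchange h_empty h_down h_aug ht1V ht1U
    -- apply induction hypothesis
    apply ih I₁ (fun i => s (i+1)) (fun i => t (i+1)) hI₁ ?_ ?_ ?_ ?_ H1' H2' H3' Z ?_
    · intro i hi1 hi2
      apply Finset.mem_insert_of_mem
      refine Finset.mem_erase.mpr ⟨?_, hs _ (by omega) (by omega)⟩
      intro h
      have := hsinj (i+1) 1 (by omega) (by omega) le_rfl (by omega) h; omega
    · intro i hi1 hi2
      simp only [hI₁def, Finset.mem_insert, Finset.mem_erase]
      push_neg
      refine ⟨?_, fun _ h => ht _ (by omega) (by omega) h⟩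
      intro h
      have := htinj (i+1) 1 (by omega) (by omega) le_rfl (by omega) h; omega
    · intro i j hi1 hi2 hj1 hj2 h
      have := hsinj (i+1) (j+1) (by omega) (by omega) (by omega) (by omega) h; omega
    · intro i j hi1 hi2 hj1 hj2 h
      have := htinj (i+1) (j+1) (by omega) (by omega) (by omega) (by omega) h; omega
    · intro x
      rw [hZ x]
      constructor
      · rintro (⟨hxI, hns⟩ | ⟨i, hi1, hi2, hx⟩)
        · left
          refine ⟨Finset.mem_insert_of_mem (Finset.mem_erase.mpr ⟨?_, hxI⟩), ?_⟩
          · intro h; exact hns ⟨1, le_rfl, by omega, h⟩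
          · rintro ⟨i, h1, h2, h3⟩; exact hns ⟨i+1, by omega, by omega, h3⟩
        · by_cases hi : i = 1
          · subst hi; left
            refine ⟨hx ▸ Finset.mem_insert_self _ _, ?_⟩
            rintro ⟨j, h1, h2, h3⟩
            rw [hx] at h3
            exact hst (j+1) 1 (by omega) (by omega) le_rfl (by omega) h3.symm
          · right
            refine ⟨i-1, by omega, by omega, ?_⟩
            rw [hx]; congr 1; omega
      · rintro (⟨hxI₁, hns⟩ | ⟨i, hi1, hi2, hx⟩)
        · rcases Finset.mem_insert.mp hxI₁ with h | h
          · right; exact ⟨1, le_rfl, by omega, h⟩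
          · rw [Finset.mem_erase] at h
            left
            refine ⟨h.2, ?_⟩
            rintro ⟨i, h1, h2, h3⟩
            by_cases hi : i = 1
            · exact h.1 (by rw [← hi]; exact h3)
            · exact hns ⟨i-1, by omega, by omega, by rw [h3]; congr 1; omega⟩
        · right; exact ⟨i+1, by omega, by omega, hx⟩

include h_empty h_down h_aug in
/-- Exchange theorem with an extra free element `x₀`. -/
lemma exc_source (m : ℕ) (I : Finset α) (x₀ : α) (s t : ℕ → α)
    (hI : Ind I) (hx₀ : x₀ ∉ I) (hx₀i : Ind (insert x₀ I))
    (hs : ∀ i, 1 ≤ i → i ≤ m → s i ∈ I)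
    (ht : ∀ i, 1 ≤ i → i ≤ m → t i ∉ I)
    (hx₀t : ∀ i, 1 ≤ i → i ≤ m → t i ≠ x₀)
    (hsinj : ∀ i j, 1 ≤ i → i ≤ m → 1 ≤ j → j ≤ m → s i = s j → i = j)
    (htinj : ∀ i j, 1 ≤ i → i ≤ m → 1 ≤ j → j ≤ m → t i = t j → i = j)
    (H1 : ∀ j, 1 ≤ j → j ≤ m → ¬ Ind (insert (t j) I))
    (H2 : ∀ j, 1 ≤ j → j ≤ m → Ind (insert (t j) (I.erase (s j))))
    (H3 : ∀ i j, 1 ≤ i → i < j → j ≤ m → ¬ Ind (insert (t j) (I.erase (s i))))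
    (Z : Finset α)
    (hZ : ∀ x, x ∈ Z ↔ (x = x₀ ∨ (x ∈ I ∧ ¬ ∃ i, 1 ≤ i ∧ i ≤ m ∧ x = s i)
        ∨ (∃ i, 1 ≤ i ∧ i ≤ m ∧ x = t i))) :
    Ind Z := by
  have hsx₀ : ∀ i, 1 ≤ i → i ≤ m → s i ≠ x₀ := by
    intro i h1 h2 h
    exact hx₀ (h ▸ hs i h1 h2)
  apply exc h_empty h_down h_aug m (insert x₀ I) s t hx₀i
    (fun i h1 h2 => Finset.mem_insert_of_mem (hs i h1 h2))
    (fun i h1 h2 => by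
      simp only [Finset.mem_insert]
      push_neg
      exact ⟨hx₀t i h1 h2, ht i h1 h2⟩)
    hsinj htinj ?_ ?_ ?_ Z ?_
  · intro j h1 h2 hind
    exact H1 j h1 h2 (h_down (Finset.insert_subset_insert _ (Finset.subset_insert _ _)) hind)
  · -- H2 for insert x₀ I
    intro j h1 h2
    have hne : s j ≠ x₀ := hsx₀ j h1 h2
    rw [Finset.erase_insert_of_ne hne.symm, Finset.insert_comm]
    set A := insert (t j) (I.erase (s j)) with hAdef
    have hAi : Ind A := H2 j h1 h2
    by_contra hdep
    have hx₀A : x₀ ∉ A := by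
      simp only [hAdef, Finset.mem_insert, Finset.mem_erase]
      push_neg
      exact ⟨fun h => (hx₀t j h1 h2) h.symm, fun _ h => hx₀ h⟩
    have hcl : inCl Ind A x₀ := inCl_of_dep h_empty hAi hx₀A hdep
    have hc1 : ∀ b ∈ A, inCl Ind I b := by
      intro b hb
      rcases Finset.mem_insert.mp hb with h | h
      · subst h; exact inCl_of_dep h_empty hI (ht j h1 h2) (H1 j h1 h2)
      · exact inCl_of_mem (Finset.mem_of_mem_erase h)
    have hc2 : inCl Ind (I ∪ A) x₀ :=
      inCl_mono h_empty h_down h_aug hcl Finset.subset_union_right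
    exact not_indep_of_inCl h_empty hI hx₀
      (inCl_trans h_empty h_down h_aug hc1 hc2) hx₀i
  · intro i j h1 hij h2 hind
    apply H3 i j h1 hij h2
    apply h_down _ hind
    apply Finset.insert_subset_insert
    intro x hx
    rw [Finset.mem_erase] at hx ⊢
    exact ⟨hx.1, Finset.mem_insert_of_mem hx.2⟩
  · intro x
    rw [hZ x]
    simp only [Finset.mem_insert]
    constructor
    · rintro (h | ⟨h, hns⟩ | h)
      · subst h
        left
        refine ⟨Or.inl rfl, ?_⟩
        rintro ⟨i, h1, h2, h3⟩
        exact hsx₀ i h1 h2 h3.symm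
      · exact Or.inl ⟨Or.inr h, hns⟩
      · exact Or.inr h
    · rintro (⟨h | h, hns⟩ | h)
      · exact Or.inl h
      · exact Or.inr (Or.inl ⟨h, hns⟩)
      · exact Or.inr (Or.inr h)

include h_empty h_down h_aug in
/-- Key step for Hall's condition: if `x ∈ P \ Y` cannot be added to `Y`, then
`x` is spanned by `(Y ∩ P) ∪ N x` where `N x` is the exchange neighbourhood. -/
lemma dep_on_nbhd (Y P : Finset α) (hY : Ind Y) (x : α) (hxP : x ∈ P) (hxY : x ∉ Y)
    (hdep : ¬ Ind (insert x Y)) :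
    ¬ Ind (insert x ((Y ∩ P) ∪ ((Y \ P).filter (fun y => Ind (insert x (Y.erase y)))))) := by
  set N : Finset α := (Y \ P).filter (fun y => Ind (insert x (Y.erase y))) with hN
  intro hind
  set B : Finset α := (Y ∩ P) ∪ N with hB
  have hBY : B ⊆ Y := by
    rw [hB, hN]
    apply Finset.union_subset Finset.inter_subset_left
    exact (Finset.filter_subset _ _).trans (Finset.sdiff_subset)
  have hxB : insert x B ⊆ insert x Y := Finset.insert_subset_insert _ hBY
  have hrk : rk Ind (insert x Y) = Y.card := by
    apply rk_of_maximal h_empty h_aug (Finset.subset_insert x Y) hY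
    intro e he heY
    rcases Finset.mem_insert.mp he with h | h
    · subst h; exact hdep
    · exact absurd h heY
  obtain ⟨B', hBB', hB'sub, hB'ind, hB'max⟩ := exists_maximal_superset hxB hind
  have hB'card : B'.card = Y.card := by
    rw [← hrk]
    exact (rk_of_maximal h_empty h_aug hB'sub hB'ind hB'max).symm
  have hxB' : x ∈ B' := hBB' (Finset.mem_insert_self x B)
  have herase_sub : B'.erase x ⊆ Y := by
    intro b hb
    rw [Finset.mem_erase] at hb
    rcases Finset.mem_insert.mp (hB'sub hb.2) with h | h
    · exact absurd h hb.1
    · exact h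
  have herase_card : (B'.erase x).card = Y.card - 1 := by
    rw [Finset.card_erase_of_mem hxB', hB'card]
  have hYne : Y.card ≠ 0 := by
    intro h
    have : 0 < B'.card := Finset.card_pos.mpr ⟨x, hxB'⟩
    omega
  have hW : (Y \ B'.erase x).card = 1 := by
    rw [Finset.card_sdiff_of_subset herase_sub, herase_card]
    omega
  obtain ⟨z, hz⟩ := Finset.card_eq_one.mp hW
  have hzY : z ∈ Y := by
    have : z ∈ Y \ B'.erase x := hz ▸ Finset.mem_singleton_self z
    exact (Finset.mem_sdiff.mp this).1
  have hzB' : z ∉ B' := by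
    have h1 : z ∈ Y \ B'.erase x := hz ▸ Finset.mem_singleton_self z
    have h2 := (Finset.mem_sdiff.mp h1).2
    intro h
    apply h2
    rw [Finset.mem_erase]
    exact ⟨fun hzx => hxY (hzx ▸ hzY), h⟩
  have hB'eq : B' = insert x (Y.erase z) := by
    apply Finset.eq_of_subset_of_card_le
    · intro b hb
      rcases Finset.mem_insert.mp (hB'sub hb) with h | h
      · exact h ▸ Finset.mem_insert_self _ _
      · apply Finset.mem_insert_of_mem
        rw [Finset.mem_erase]
        exact ⟨fun hbz => hzB' (hbz ▸ hb), h⟩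
    · rw [Finset.card_insert_of_notMem (fun h => hxY (Finset.mem_of_mem_erase h)),
        Finset.card_erase_of_mem hzY, hB'card]
      omega
  have hzN : z ∈ N := by
    rw [hN, Finset.mem_filter, Finset.mem_sdiff]
    refine ⟨⟨hzY, ?_⟩, ?_⟩
    · intro hzP
      apply hzB'
      apply hBB'
      apply Finset.mem_insert_of_mem
      rw [hB]
      exact Finset.mem_union_left _ (Finset.mem_inter.mpr ⟨hzY, hzP⟩)
    · rw [← hB'eq]; exact hB'ind
  apply hzB'
  apply hBB'
  apply Finset.mem_insert_of_mem
  rw [hB]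
  exact Finset.mem_union_right _ hzN

include h_empty h_down h_aug in
/-- Hall-based matching: every element of `P \ Y` that cannot be directly added
to `Y` can be matched injectively to an exchange partner in `Y \ P`. -/
lemma hall_exchange (Y P : Finset α) (hY : Ind Y) (hP : Ind P) (D : Finset α)
    (hD : ∀ x, x ∈ D ↔ (x ∈ P ∧ x ∉ Y ∧ ¬ Ind (insert x Y))) :
    ∃ f : α → α,
      (∀ x ∈ D, (f x ∈ Y ∧ f x ∉ P) ∧ Ind (insert x (Y.erase (f x)))) ∧
      (∀ x ∈ D, ∀ x' ∈ D, f x = f x' → x = x') := by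
  set N : α → Finset α := fun x => (Y \ P).filter (fun y => Ind (insert x (Y.erase y))) with hN
  have hall : ∀ S : Finset {z // z ∈ D}, S.card ≤ (S.biUnion (fun z => N z.1)).card := by
    intro S
    set S' : Finset α := S.image Subtype.val with hS'
    have hcard : S'.card = S.card := Finset.card_image_of_injective S Subtype.val_injective
    have hbu : S.biUnion (fun z => N z.1) = S'.biUnion N := by
      rw [hS', Finset.image_biUnion]
    set NS : Finset α := S'.biUnion N with hNS
    set Q : Finset α := (Y ∩ P) ∪ NS with hQ
    have hS'D : S' ⊆ D := by
      intro x hx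
      rw [hS', Finset.mem_image] at hx
      obtain ⟨z, _, rfl⟩ := hx
      exact z.2
    have hNSY : NS ⊆ Y \ P := by
      rw [hNS]
      intro y hy
      rw [Finset.mem_biUnion] at hy
      obtain ⟨x, _, hyx⟩ := hy
      exact (Finset.filter_subset _ _) hyx
    have hQY : Q ⊆ Y := by
      rw [hQ]
      exact Finset.union_subset Finset.inter_subset_left (hNSY.trans Finset.sdiff_subset)
    have hQind : Ind Q := h_down hQY hY
    have hdepQ : ∀ x ∈ S', ¬ Ind (insert x Q) := by
      intro x hx hind
      have hxD := hS'D hx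
      rw [hD] at hxD
      apply dep_on_nbhd h_empty h_down h_aug Y P hY x hxD.1 hxD.2.1 hxD.2.2
      apply h_down _ hind
      apply Finset.insert_subset_insert
      rw [hQ]
      apply Finset.union_subset_union_right
      rw [hNS]
      intro y hy
      rw [Finset.mem_biUnion]
      exact ⟨x, hx, hy⟩
    have hrkQS : rk Ind (Q ∪ S') = Q.card := by
      apply rk_of_maximal h_empty h_aug Finset.subset_union_left hQind
      intro e he heQ
      rcases Finset.mem_union.mp he with h | h
      · exact absurd h heQ
      · exact hdepQ e h
    have hsub2 : (Y ∩ P) ∪ S' ⊆ Q ∪ S' := Finset.union_subset_union_left Finset.subset_union_left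
    have hindYP : Ind ((Y ∩ P) ∪ S') := by
      apply h_down _ hP
      apply Finset.union_subset Finset.inter_subset_right
      intro x hx
      exact ((hD x).mp (hS'D hx)).1
    have hle := le_rk_of_indep (Ind := Ind) hsub2 hindYP
    rw [hrkQS] at hle
    have hdisj : Disjoint (Y ∩ P) S' := by
      rw [Finset.disjoint_left]
      intro a ha haS
      exact ((hD a).mp (hS'D haS)).2.1 (Finset.mem_inter.mp ha).1
    have hcard2 : ((Y ∩ P) ∪ S').card = (Y ∩ P).card + S'.card :=
      Finset.card_union_of_disjoint hdisj
    have hcard3 : Q.card ≤ (Y ∩ P).card + NS.card := by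
      rw [hQ]; exact Finset.card_union_le _ _
    rw [hbu]
    omega
  obtain ⟨f₀, hf₀inj, hf₀mem⟩ :=
    (Finset.all_card_le_biUnion_card_iff_exists_injective (fun z : {z // z ∈ D} => N z.1)).mp hall
  refine ⟨fun x => if h : x ∈ D then f₀ ⟨x, h⟩ else x, ?_, ?_⟩
  · intro x hx
    simp only [dif_pos hx]
    have := hf₀mem ⟨x, hx⟩
    rw [hN, Finset.mem_filter, Finset.mem_sdiff] at this
    exact ⟨⟨this.1.1, this.1.2⟩, this.2⟩
  · intro x hx x' hx' h
    simp only [dif_pos hx, dif_pos hx'] at h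
    have := hf₀inj h
    exact congrArg Subtype.val this

end OneMatroid

section Orbits

variable (D₁ D₂ : Finset α) (f₁ f₂ : α → α)

open Classical in
/-- One step of the alternating walk: from `x`, go to `f₂ x` and back along `f₁`. -/
noncomputable def pstep (x : α) : Option α :=
  if h : x ∈ D₂ ∧ ∃ x' ∈ D₁, f₁ x' = f₂ x then some h.2.choose else none

lemma pstep_some {x v : α} (h : pstep D₁ D₂ f₁ f₂ x = some v) :
    x ∈ D₂ ∧ v ∈ D₁ ∧ f₁ v = f₂ x := by
  rw [pstep] at h
  split_ifs at h with hc
  obtain ⟨h1, h2⟩ := hc.2.choose_spec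
  cases h
  exact ⟨hc.1, h1, h2⟩

lemma pstep_none {x : α} (h : pstep D₁ D₂ f₁ f₂ x = none) :
    x ∉ D₂ ∨ ∀ x' ∈ D₁, f₁ x' ≠ f₂ x := by
  rw [pstep] at h
  split_ifs at h with hc
  by_cases hx : x ∈ D₂
  · right
    intro x' hx' heq
    exact hc ⟨hx, x', hx', heq⟩
  · exact Or.inl hx

lemma pstep_inj (hf₂inj : ∀ x ∈ D₂, ∀ x' ∈ D₂, f₂ x = f₂ x' → x = x')
    {x x' v : α} (h : pstep D₁ D₂ f₁ f₂ x = some v) (h' : pstep D₁ D₂ f₁ f₂ x' = some v) :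
    x = x' := by
  obtain ⟨h1, _, h3⟩ := pstep_some D₁ D₂ f₁ f₂ h
  obtain ⟨h1', _, h3'⟩ := pstep_some D₁ D₂ f₁ f₂ h'
  exact hf₂inj x h1 x' h1' (h3 ▸ h3' ▸ rfl)

/-- Iterated walk. -/
noncomputable def piter : ℕ → α → Option α
  | 0, a => some a
  | n+1, a => (piter n a).bind (pstep D₁ D₂ f₁ f₂)

lemma piter_mem_D₁ {n : ℕ} (hn : 1 ≤ n) {a v : α} (h : piter D₁ D₂ f₁ f₂ n a = some v) :
    v ∈ D₁ := by
  obtain ⟨n, rfl⟩ : ∃ m, n = m + 1 := ⟨n - 1, by omega⟩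
  rw [piter] at h
  rcases Option.bind_eq_some_iff.mp h with ⟨w, _, hw⟩
  exact (pstep_some D₁ D₂ f₁ f₂ hw).2.1

variable {D₁ D₂ f₁ f₂}

lemma piter_shift (hf₂inj : ∀ x ∈ D₂, ∀ x' ∈ D₂, f₂ x = f₂ x' → x = x') :
    ∀ (a b : ℕ) (s s' v : α), a ≤ b →
    piter D₁ D₂ f₁ f₂ a s = some v → piter D₁ D₂ f₁ f₂ b s' = some v →
    piter D₁ D₂ f₁ f₂ (b - a) s' = some s := by
  intro a
  induction a with
  | zero =>
    intro b s s' v _ h1 h2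
    rw [piter] at h1
    cases h1
    simpa using h2
  | succ a ih =>
    intro b s s' v hab h1 h2
    obtain ⟨c, rfl⟩ : ∃ c, b = c + 1 := ⟨b - 1, by omega⟩
    rw [piter] at h1 h2
    rcases Option.bind_eq_some_iff.mp h1 with ⟨w, hw1, hw2⟩
    rcases Option.bind_eq_some_iff.mp h2 with ⟨w', hw1', hw2'⟩
    have : w = w' := pstep_inj D₁ D₂ f₁ f₂ hf₂inj hw2 hw2'
    subst this
    have : c + 1 - (a + 1) = c - a := by omega
    rw [this]
    exact ih c s s' w (by omega) hw1 hw1'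

lemma piter_no_repeat (hf₂inj : ∀ x ∈ D₂, ∀ x' ∈ D₂, f₂ x = f₂ x' → x = x')
    {s : α} (hs : s ∉ D₁) {a b : ℕ} {v : α}
    (h1 : piter D₁ D₂ f₁ f₂ a s = some v) (h2 : piter D₁ D₂ f₁ f₂ b s = some v) :
    a = b := by
  rcases Nat.le_total a b with hab | hab
  · have := piter_shift hf₂inj a b s s v hab h1 h2
    by_contra hne
    exact hs (piter_mem_D₁ D₁ D₂ f₁ f₂ (by omega) this)
  · have := piter_shift hf₂inj b a s s v hab h2 h1
    by_contra hne
    exact hs (piter_mem_D₁ D₁ D₂ f₁ f₂ (by omega) this)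

lemma piter_cross (hf₂inj : ∀ x ∈ D₂, ∀ x' ∈ D₂, f₂ x = f₂ x' → x = x')
    {s s' : α} (hs : s ∉ D₁) (hs' : s' ∉ D₁) (hne : s ≠ s') {a b : ℕ} {v : α}
    (h1 : piter D₁ D₂ f₁ f₂ a s = some v) (h2 : piter D₁ D₂ f₁ f₂ b s' = some v) :
    False := by
  rcases Nat.le_total a b with hab | hab
  · have := piter_shift hf₂inj a b s s' v hab h1 h2
    rcases Nat.eq_zero_or_pos (b - a) with h | h
    · rw [h, piter] at this; cases this; exact hne rfl
    · exact hs (piter_mem_D₁ D₁ D₂ f₁ f₂ (by omega) this)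
  · have := piter_shift hf₂inj b a s' s v hab h2 h1
    rcases Nat.eq_zero_or_pos (a - b) with h | h
    · rw [h, piter] at this; cases this; exact hne rfl
    · exact hs' (piter_mem_D₁ D₁ D₂ f₁ f₂ (by omega) this)

lemma piter_stops (hf₂inj : ∀ x ∈ D₂, ∀ x' ∈ D₂, f₂ x = f₂ x' → x = x')
    (hD₁ : D₁ ⊆ D₁ ∪ D₂) {s : α} (hs : s ∉ D₁) :
    ∃ n, piter D₁ D₂ f₁ f₂ n s = none := by
  by_contra h
  push_neg at h
  set g : ℕ → α := fun n => (piter D₁ D₂ f₁ f₂ n s).getD s with hg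
  have hgs : ∀ n, piter D₁ D₂ f₁ f₂ n s = some (g n) := by
    intro n
    rcases Option.ne_none_iff_exists'.mp (h n) with ⟨v, hv⟩
    rw [hv, hg]; simp [hv]
  have hinj : Function.Injective g := by
    intro a b hab
    exact piter_no_repeat hf₂inj hs (hgs a) (hab ▸ hgs b)
  have hmem : ∀ n, 1 ≤ n → g n ∈ D₁ := fun n hn =>
    piter_mem_D₁ D₁ D₂ f₁ f₂ hn (hgs n)
  have : ∀ n ∈ Finset.Icc 1 (D₁.card + 1), g n ∈ D₁ := fun n hn =>
    hmem n (Finset.mem_Icc.mp hn).1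
  have hcard := Finset.card_le_card_of_injOn g this (hinj.injOn)
  rw [Nat.card_Icc] at hcard
  omega

end Orbits

open Classical in
lemma orbit_paths (Q R D₁ D₂ : Finset α) (f₁ f₂ : α → α) (k : ℕ)
    (hD₁Q : D₁ ⊆ Q) (hD₂Q : D₂ ⊆ Q)
    (hf₁R : ∀ x ∈ D₁, f₁ x ∈ R)
    (hf₁inj : ∀ x ∈ D₁, ∀ x' ∈ D₁, f₁ x = f₁ x' → x = x')
    (hf₂R : ∀ x ∈ D₂, f₂ x ∈ R)
    (hf₂inj : ∀ x ∈ D₂, ∀ x' ∈ D₂, f₂ x = f₂ x' → x = x')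
    (hk : R.card + k ≤ Q.card) :
    ∃ (x : Fin k → ℕ → α) (m : Fin k → ℕ),
      (∀ a, x a 0 ∉ D₁) ∧
      (∀ a, ∀ i ≤ m a, x a i ∈ Q) ∧
      (∀ a, x a (m a) ∉ D₂) ∧
      (∀ a, ∀ i < m a, x a i ∈ D₂ ∧ x a (i+1) ∈ D₁ ∧ f₁ (x a (i+1)) = f₂ (x a i)) ∧
      (∀ a, ∀ i ≤ m a, ∀ j ≤ m a, x a i = x a j → i = j) ∧
      (∀ a b, a ≠ b → ∀ i ≤ m a, ∀ j ≤ m b, x a i ≠ x b j) := by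
  have hstop : ∀ s, s ∉ D₁ → ∃ n, piter D₁ D₂ f₁ f₂ n s = none := fun s hs =>
    piter_stops hf₂inj Finset.subset_union_left hs
  set ms : α → ℕ := fun s => if h : s ∉ D₁ then Nat.find (hstop s h) - 1 else 0 with hms
  set xv : α → ℕ → α := fun s i => (piter D₁ D₂ f₁ f₂ i s).getD s with hxv
  have hfind_pos : ∀ s (h : s ∉ D₁), 1 ≤ Nat.find (hstop s h) := by
    intro s h
    by_contra hc
    have h0 : Nat.find (hstop s h) = 0 := by omega
    have := Nat.find_spec (hstop s h)
    rw [h0, piter] at this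
    cases this
  have hsome : ∀ s, s ∉ D₁ → ∀ i ≤ ms s, piter D₁ D₂ f₁ f₂ i s = some (xv s i) := by
    intro s hs i hi
    rw [hms] at hi
    simp only [dif_pos hs] at hi
    have hlt : i < Nat.find (hstop s hs) := by
      have := hfind_pos s hs; omega
    have hne := Nat.find_min (hstop s hs) hlt
    rcases Option.ne_none_iff_exists'.mp hne with ⟨v, hv⟩
    rw [hxv, hv]
    simp [hv]
  have hnone : ∀ s (hs : s ∉ D₁), piter D₁ D₂ f₁ f₂ (ms s + 1) s = none := by
    intro s hs
    have := Nat.find_spec (hstop s hs)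
    have heq : ms s + 1 = Nat.find (hstop s hs) := by
      rw [hms]; simp only [dif_pos hs]
      have := hfind_pos s hs; omega
    rw [heq]
    exact this
  set SRC : Finset α := Q \ D₁ with hSRC
  set GOOD : Finset α := SRC.filter (fun s => xv s (ms s) ∉ D₂) with hGOOD
  set BAD : Finset α := SRC.filter (fun s => ¬ xv s (ms s) ∉ D₂) with hBAD
  have hsrc_not : ∀ s ∈ SRC, s ∉ D₁ := by
    intro s hs'
    exact (Finset.mem_sdiff.mp hs').2
  -- counting
  have hgood_card : k ≤ GOOD.card := by
    have hsplit : GOOD.card + BAD.card = SRC.card := by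
      rw [hGOOD, hBAD]
      exact Finset.card_filter_add_card_filter_not _
    have hsrc_card : SRC.card = Q.card - D₁.card := by
      rw [hSRC, Finset.card_sdiff_of_subset hD₁Q]
    have him : D₁.image f₁ ⊆ R := by
      intro y hy
      rw [Finset.mem_image] at hy
      obtain ⟨x, hx, rfl⟩ := hy
      exact hf₁R x hx
    have him_card : (D₁.image f₁).card = D₁.card :=
      Finset.card_image_of_injOn (fun x hx x' hx' h => hf₁inj x hx x' hx' h)
    have hbad : BAD.card ≤ R.card - D₁.card := by
      have h1 : ∀ s ∈ BAD, f₂ (xv s (ms s)) ∈ R \ D₁.image f₁ := by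
        intro s hsB
        rw [hBAD, Finset.mem_filter] at hsB
        have hsD₁ := hsrc_not s hsB.1
        have heD₂ : xv s (ms s) ∈ D₂ := not_not.mp hsB.2
        have hps : pstep D₁ D₂ f₁ f₂ (xv s (ms s)) = none := by
          have h2 := hnone s hsD₁
          rw [piter, hsome s hsD₁ (ms s) le_rfl] at h2
          exact h2
        rcases pstep_none D₁ D₂ f₁ f₂ hps with h | h
        · exact absurd heD₂ h
        · rw [Finset.mem_sdiff]
          refine ⟨hf₂R _ heD₂, ?_⟩
          rw [Finset.mem_image]
          rintro ⟨x', hx', hfx'⟩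
          exact h x' hx' hfx'
      have h2 : Set.InjOn (fun s => f₂ (xv s (ms s))) BAD := by
        intro s hsB0 s' hsB0' heq
        simp only at heq
        have hsB := Finset.mem_filter.mp (Finset.mem_coe.mp hsB0)
        have hsB' := Finset.mem_filter.mp (Finset.mem_coe.mp hsB0')
        have e1 : xv s (ms s) ∈ D₂ := not_not.mp hsB.2
        have e2 : xv s' (ms s') ∈ D₂ := not_not.mp hsB'.2
        have : xv s (ms s) = xv s' (ms s') := hf₂inj _ e1 _ e2 heq
        by_contra hne
        exact piter_cross hf₂inj (hsrc_not s hsB.1) (hsrc_not s' hsB'.1) hne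
          (hsome s (hsrc_not s hsB.1) (ms s) le_rfl)
          (this ▸ hsome s' (hsrc_not s' hsB'.1) (ms s') le_rfl)
      have h3 := Finset.card_le_card_of_injOn _ h1 h2
      have h4 : (R \ D₁.image f₁).card = R.card - D₁.card := by
        rw [Finset.card_sdiff_of_subset him, him_card]
      omega
    have hD₁R : D₁.card ≤ R.card := him_card ▸ Finset.card_le_card him
    omega
  -- choose k good sources
  have hlen : GOOD.toList.length = GOOD.card := Finset.length_toList GOOD
  set g : Fin k → α := fun a => GOOD.toList.get ⟨a, by omega⟩ with hg
  have hgmem : ∀ a, g a ∈ GOOD := by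
    intro a
    rw [hg, ← Finset.mem_toList]
    exact List.get_mem _ _
  have hginj : ∀ a b, g a = g b → a = b := by
    intro a b hab
    have h2 := congrArg Fin.val ((List.Nodup.get_inj_iff (Finset.nodup_toList GOOD)).mp hab)
    exact Fin.ext h2
  have hgD₁ : ∀ a, g a ∉ D₁ := fun a => hsrc_not _ (Finset.mem_filter.mp (hgmem a)).1
  refine ⟨fun a => xv (g a), fun a => ms (g a), ?_, ?_, ?_, ?_, ?_, ?_⟩
  · intro a
    show xv (g a) 0 ∉ D₁
    have : xv (g a) 0 = g a := by rw [hxv]; simp [piter]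
    rw [this]; exact hgD₁ a
  · intro a i hi
    show xv (g a) i ∈ Q
    rcases Nat.eq_zero_or_pos i with h | h
    · subst h
      have : xv (g a) 0 = g a := by rw [hxv]; simp [piter]
      rw [this]
      exact (Finset.mem_sdiff.mp (Finset.mem_filter.mp (hgmem a)).1).1
    · exact hD₁Q (piter_mem_D₁ D₁ D₂ f₁ f₂ h (hsome _ (hgD₁ a) i hi))
  · intro a
    show xv (g a) (ms (g a)) ∉ D₂
    exact (Finset.mem_filter.mp (hgmem a)).2
  · intro a i hi
    have hi' : i < ms (g a) := hi
    have h1 := hsome _ (hgD₁ a) i (by omega)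
    have h2 := hsome _ (hgD₁ a) (i+1) (by omega)
    rw [piter, h1] at h2
    have := pstep_some D₁ D₂ f₁ f₂ h2
    exact ⟨this.1, this.2.1, this.2.2⟩
  · intro a i hi j hj heq
    have heq' : xv (g a) i = xv (g a) j := heq
    exact piter_no_repeat hf₂inj (hgD₁ a) (hsome _ (hgD₁ a) i hi)
      (heq' ▸ hsome _ (hgD₁ a) j hj)
  · intro a b hab i hi j hj heq
    have heq' : xv (g a) i = xv (g b) j := heq
    exact piter_cross hf₂inj (hgD₁ a) (hgD₁ b) (fun h => hab (hginj a b h))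
      (hsome _ (hgD₁ a) i hi) (heq' ▸ hsome _ (hgD₁ b) j hj)

section TwoMatroids

variable (Ind₁ Ind₂ : Finset α → Prop) (Y : Finset α)

/-- A valid alternating sequence within vertex set `W`. -/
def VS (W : Finset α) (m : ℕ) (x y : ℕ → α) : Prop :=
  (∀ i ≤ m, x i ∈ W ∧ x i ∉ Y) ∧
  (∀ i, 1 ≤ i → i ≤ m → y i ∈ W ∧ y i ∈ Y) ∧
  Ind₁ (insert (x 0) Y) ∧
  Ind₂ (insert (x m) Y) ∧
  (∀ i, 1 ≤ i → i ≤ m → Ind₁ (insert (x i) (Y.erase (y i)))) ∧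
  (∀ i, 1 ≤ i → i ≤ m → Ind₂ (insert (x (i-1)) (Y.erase (y i))))

variable {Ind₁ Ind₂ Y}

lemma suffix_splice {W : Finset α} {M : ℕ} {xs ys : ℕ → α}
    (h : VS Ind₁ Ind₂ Y W M xs ys) {i : ℕ} (hi : i ≤ M)
    (hI : Ind₁ (insert (xs i) Y)) :
    VS Ind₁ Ind₂ Y W (M - i) (fun n => xs (n + i)) (fun n => ys (n + i)) := by
  obtain ⟨h1, h2, h3, h4, h5, h6⟩ := h
  refine ⟨?_, ?_, ?_, ?_, ?_, ?_⟩
  · intro n hn; exact h1 (n + i) (by omega)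
  · intro n hn1 hn2; exact h2 (n + i) (by omega) (by omega)
  · show Ind₁ (insert (xs (0 + i)) Y)
    rw [Nat.zero_add]; exact hI
  · show Ind₂ (insert (xs (M - i + i)) Y)
    have : M - i + i = M := by omega
    rw [this]; exact h4
  · intro n hn1 hn2; exact h5 (n + i) (by omega) (by omega)
  · intro n hn1 hn2
    show Ind₂ (insert (xs (n - 1 + i)) (Y.erase (ys (n + i))))
    have : n - 1 + i = n + i - 1 := by omega
    rw [this]
    exact h6 (n + i) (by omega) (by omega)

lemma prefix_splice {W : Finset α} {M : ℕ} {xs ys : ℕ → α}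
    (h : VS Ind₁ Ind₂ Y W M xs ys) {i : ℕ} (hi : i ≤ M)
    (hI : Ind₂ (insert (xs i) Y)) :
    VS Ind₁ Ind₂ Y W i xs ys := by
  obtain ⟨h1, h2, h3, h4, h5, h6⟩ := h
  exact ⟨fun n hn => h1 n (by omega), fun n hn1 hn2 => h2 n hn1 (by omega), h3, hI,
    fun n hn1 hn2 => h5 n hn1 (by omega), fun n hn1 hn2 => h6 n hn1 (by omega)⟩

lemma mid_splice1 {W : Finset α} {M : ℕ} {xs ys : ℕ → α}
    (h : VS Ind₁ Ind₂ Y W M xs ys) {i j : ℕ} (hi : 1 ≤ i) (hij : i < j) (hj : j ≤ M)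
    (hI : Ind₁ (insert (xs j) (Y.erase (ys i)))) :
    VS Ind₁ Ind₂ Y W (M - (j - i)) (fun n => if n < i then xs n else xs (n + (j - i)))
      (fun n => if n ≤ i then ys n else ys (n + (j - i))) := by
  obtain ⟨h1, h2, h3, h4, h5, h6⟩ := h
  set d := j - i with hd
  refine ⟨?_, ?_, ?_, ?_, ?_, ?_⟩
  · intro n hn
    by_cases hc : n < i
    · simp only [if_pos hc]; exact h1 n (by omega)
    · simp only [if_neg hc]; exact h1 (n + d) (by omega)
  · intro n hn1 hn2
    by_cases hc : n ≤ i
    · simp only [if_pos hc]; exact h2 n hn1 (by omega)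
    · simp only [if_neg hc]; exact h2 (n + d) (by omega) (by omega)
  · show Ind₁ (insert (if 0 < i then xs 0 else xs (0 + d)) Y)
    rw [if_pos (by omega)]; exact h3
  · show Ind₂ (insert (if M - d < i then xs (M - d) else xs (M - d + d)) Y)
    rw [if_neg (by omega)]
    have : M - d + d = M := by omega
    rw [this]; exact h4
  · intro n hn1 hn2
    by_cases hc : n < i
    · simp only [if_pos hc, if_pos (by omega : n ≤ i)]
      exact h5 n hn1 (by omega)
    · by_cases hc2 : n = i
      · rw [hc2]
        simp only [if_neg (lt_irrefl i), if_pos (le_refl i)]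
        have : i + d = j := by omega
        rw [this]; exact hI
      · simp only [if_neg hc, if_neg (by omega : ¬ n ≤ i)]
        exact h5 (n + d) (by omega) (by omega)
  · intro n hn1 hn2
    by_cases hc : n ≤ i
    · simp only [if_pos hc, if_pos (by omega : n - 1 < i)]
      exact h6 n hn1 (by omega)
    · simp only [if_neg hc, if_neg (by omega : ¬ n - 1 < i)]
      have : n - 1 + d = n + d - 1 := by omega
      rw [this]
      exact h6 (n + d) (by omega) (by omega)

lemma mid_splice2 {W : Finset α} {M : ℕ} {xs ys : ℕ → α}
    (h : VS Ind₁ Ind₂ Y W M xs ys) {i j : ℕ} (hij : i + 1 < j) (hj : j ≤ M)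
    (hI : Ind₂ (insert (xs i) (Y.erase (ys j)))) :
    VS Ind₁ Ind₂ Y W (M - (j - i - 1)) (fun n => if n ≤ i then xs n else xs (n + (j - i - 1)))
      (fun n => if n ≤ i then ys n else ys (n + (j - i - 1))) := by
  obtain ⟨h1, h2, h3, h4, h5, h6⟩ := h
  set d := j - i - 1 with hd
  refine ⟨?_, ?_, ?_, ?_, ?_, ?_⟩
  · intro n hn
    by_cases hc : n ≤ i
    · simp only [if_pos hc]; exact h1 n (by omega)
    · simp only [if_neg hc]; exact h1 (n + d) (by omega)
  · intro n hn1 hn2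
    by_cases hc : n ≤ i
    · simp only [if_pos hc]; exact h2 n hn1 (by omega)
    · simp only [if_neg hc]; exact h2 (n + d) (by omega) (by omega)
  · show Ind₁ (insert (if 0 ≤ i then xs 0 else xs (0 + d)) Y)
    rw [if_pos (by omega)]; exact h3
  · show Ind₂ (insert (if M - d ≤ i then xs (M - d) else xs (M - d + d)) Y)
    rw [if_neg (by omega)]
    have : M - d + d = M := by omega
    rw [this]; exact h4
  · intro n hn1 hn2
    by_cases hc : n ≤ i
    · simp only [if_pos hc]
      exact h5 n hn1 (by omega)
    · simp only [if_neg hc]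
      exact h5 (n + d) (by omega) (by omega)
  · intro n hn1 hn2
    by_cases hc : n ≤ i
    · simp only [if_pos hc, if_pos (by omega : n - 1 ≤ i)]
      exact h6 n hn1 (by omega)
    · by_cases hc2 : n = i + 1
      · subst hc2
        simp only [if_neg hc, if_pos (by omega : i + 1 - 1 ≤ i)]
        have e1 : i + 1 - 1 = i := by omega
        have e2 : i + 1 + d = j := by omega
        rw [e1, e2]
        exact hI
      · simp only [if_neg hc, if_neg (by omega : ¬ n - 1 ≤ i)]
        have : n - 1 + d = n + d - 1 := by omega
        rw [this]
        exact h6 (n + d) (by omega) (by omega)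

end TwoMatroids

section MinVS

variable {Ind₁ Ind₂ : Finset α → Prop} {Y : Finset α}

open Classical in
lemma exists_min_vs {W : Finset α} (hex : ∃ m x y, VS Ind₁ Ind₂ Y W m x y) :
    ∃ M xs ys, VS Ind₁ Ind₂ Y W M xs ys ∧
      (∀ i j, i ≤ M → j ≤ M → xs i = xs j → i = j) ∧
      (∀ i j, 1 ≤ i → i ≤ M → 1 ≤ j → j ≤ M → ys i = ys j → i = j) ∧
      (∀ i, 1 ≤ i → i ≤ M → ¬ Ind₁ (insert (xs i) Y)) ∧
      (∀ i, i < M → ¬ Ind₂ (insert (xs i) Y)) ∧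
      (∀ i j, 1 ≤ i → i < j → j ≤ M → ¬ Ind₁ (insert (xs j) (Y.erase (ys i)))) ∧
      (∀ i j, i + 1 < j → j ≤ M → ¬ Ind₂ (insert (xs i) (Y.erase (ys j)))) := by
  have hex' : ∃ m, ∃ x y, VS Ind₁ Ind₂ Y W m x y := hex
  set M := Nat.find hex' with hM
  obtain ⟨xs, ys, hvs⟩ := Nat.find_spec hex'
  have hmin : ∀ m', m' < M → ¬ ∃ x y, VS Ind₁ Ind₂ Y W m' x y := fun m' h => Nat.find_min hex' h
  -- no-shortcut facts
  have n1 : ∀ i, 1 ≤ i → i ≤ M → ¬ Ind₁ (insert (xs i) Y) := by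
    intro i h1 h2 hI
    exact hmin (M - i) (by omega) ⟨_, _, suffix_splice hvs h2 hI⟩
  have n2 : ∀ i, i < M → ¬ Ind₂ (insert (xs i) Y) := by
    intro i h1 hI
    exact hmin i (by omega) ⟨_, _, prefix_splice hvs (by omega) hI⟩
  have n3 : ∀ i j, 1 ≤ i → i < j → j ≤ M → ¬ Ind₁ (insert (xs j) (Y.erase (ys i))) := by
    intro i j h1 h2 h3 hI
    exact hmin (M - (j - i)) (by omega) ⟨_, _, mid_splice1 hvs h1 h2 h3 hI⟩
  have n4 : ∀ i j, i + 1 < j → j ≤ M → ¬ Ind₂ (insert (xs i) (Y.erase (ys j))) := by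
    intro i j h1 h2 hI
    exact hmin (M - (j - i - 1)) (by omega) ⟨_, _, mid_splice2 hvs h1 h2 hI⟩
  have xinj : ∀ i j, i ≤ M → j ≤ M → xs i = xs j → i = j := by
    have key : ∀ i j, i < j → j ≤ M → xs i = xs j → False := by
      intro i j hij hj heq
      rcases Nat.eq_zero_or_pos i with h0 | h0
      · subst h0
        apply n1 j (by omega) hj
        rw [← heq]
        exact hvs.2.2.1
      · apply n3 i j h0 hij hj
        rw [← heq]
        exact hvs.2.2.2.2.1 i h0 (by omega)
    intro i j hi hj heq
    rcases lt_trichotomy i j with h | h | h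
    · exact absurd heq (fun he => key i j h hj he)
    · exact h
    · exact absurd heq.symm (fun he => key j i h hi he)
  have yinj : ∀ i j, 1 ≤ i → i ≤ M → 1 ≤ j → j ≤ M → ys i = ys j → i = j := by
    have key : ∀ i j, 1 ≤ i → i < j → j ≤ M → ys i = ys j → False := by
      intro i j hi hij hj heq
      apply n3 i j hi hij hj
      rw [heq]
      exact hvs.2.2.2.2.1 j (by omega) hj
    intro i j hi1 hi2 hj1 hj2 heq
    rcases lt_trichotomy i j with h | h | h
    · exact absurd heq (fun he => key i j hi1 h hj2 he)
    · exact h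
    · exact absurd heq.symm (fun he => key j i hj1 h hi2 he)
  exact ⟨M, xs, ys, hvs, xinj, yinj, n1, n2, n3, n4⟩

end MinVS

lemma augment
    {Ind₁ Ind₂ : Finset α → Prop} {Y : Finset α}
    (h_empty₁ : Ind₁ ∅)
    (h_down₁ : ∀ ⦃A B : Finset α⦄, A ⊆ B → Ind₁ B → Ind₁ A)
    (h_aug₁ : ∀ ⦃A B : Finset α⦄, Ind₁ A → Ind₁ B → A.card < B.card →
      ∃ e ∈ B \ A, Ind₁ (insert e A))
    (h_empty₂ : Ind₂ ∅)
    (h_down₂ : ∀ ⦃A B : Finset α⦄, A ⊆ B → Ind₂ B → Ind₂ A)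
    (h_aug₂ : ∀ ⦃A B : Finset α⦄, Ind₂ A → Ind₂ B → A.card < B.card →
      ∃ e ∈ B \ A, Ind₂ (insert e A))
    {W : Finset α}
    (hex : ∃ m x y, VS Ind₁ Ind₂ Y W m x y) :
    ∃ X : Finset α, X ⊆ W ∧ Ind₁ (symmDiff Y X) ∧ Ind₂ (symmDiff Y X) ∧
      (symmDiff Y X).card = Y.card + 1 := by
  obtain ⟨M, xs, ys, hvs, xinj, yinj, n1, n2, n3, n4⟩ := exists_min_vs hex
  obtain ⟨hmemx, hmemy, hx0, hxM, hp1, hp2⟩ := hvs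
  set XS : Finset α := (Finset.range (M+1)).image xs with hXS
  set YS : Finset α := (Finset.Icc 1 M).image ys with hYS
  set X : Finset α := XS ∪ YS with hX
  have hmemX : ∀ v, v ∈ X ↔ (∃ i, i ≤ M ∧ v = xs i) ∨ (∃ i, 1 ≤ i ∧ i ≤ M ∧ v = ys i) := by
    intro v
    rw [hX, Finset.mem_union, hXS, hYS]
    simp only [Finset.mem_image, Finset.mem_range, Finset.mem_Icc]
    constructor
    · rintro (⟨i, hi, rfl⟩ | ⟨i, hi, rfl⟩)
      · exact Or.inl ⟨i, by omega, rfl⟩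
      · exact Or.inr ⟨i, hi.1, hi.2, rfl⟩
    · rintro (⟨i, hi, rfl⟩ | ⟨i, hi1, hi2, rfl⟩)
      · exact Or.inl ⟨i, by omega, rfl⟩
      · exact Or.inr ⟨i, ⟨hi1, hi2⟩, rfl⟩
  have hZ : ∀ v, v ∈ symmDiff Y X ↔
      ((v ∈ Y ∧ ¬ ∃ i, 1 ≤ i ∧ i ≤ M ∧ v = ys i) ∨ (∃ i, i ≤ M ∧ v = xs i)) := by
    intro v
    rw [Finset.mem_symmDiff]
    constructor
    · rintro (⟨hv, hnx⟩ | ⟨hx, hnv⟩)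
      · left
        refine ⟨hv, ?_⟩
        rintro ⟨i, h1, h2, h3⟩
        exact hnx ((hmemX v).mpr (Or.inr ⟨i, h1, h2, h3⟩))
      · rcases (hmemX v).mp hx with ⟨i, hi, rfl⟩ | ⟨i, h1, h2, rfl⟩
        · exact Or.inr ⟨i, hi, rfl⟩
        · exact absurd (hmemy i h1 h2).2 hnv
    · rintro (⟨hv, hny⟩ | ⟨i, hi, rfl⟩)
      · left
        refine ⟨hv, fun hx => ?_⟩
        rcases (hmemX v).mp hx with ⟨i, hi, rfl⟩ | ⟨i, h1, h2, h3⟩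
        · exact (hmemx i hi).2 hv
        · exact hny ⟨i, h1, h2, h3⟩
      · right
        refine ⟨(hmemX _).mpr (Or.inl ⟨i, hi, rfl⟩), (hmemx i hi).2⟩
  refine ⟨X, ?_, ?_, ?_, ?_⟩
  · -- X ⊆ W
    intro v hv
    rcases (hmemX v).mp hv with ⟨i, hi, rfl⟩ | ⟨i, h1, h2, rfl⟩
    · exact (hmemx i hi).1
    · exact (hmemy i h1 h2).1
  · -- Ind₁
    apply exc_source h_empty₁ h_down₁ h_aug₁ M Y (xs 0) ys xs
      (h_down₁ (Finset.subset_insert _ _) hx0)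
      (hmemx 0 (by omega)).2 hx0
      (fun i h1 h2 => (hmemy i h1 h2).2)
      (fun i h1 h2 => (hmemx i h2).2)
      (fun i h1 h2 heq => by have := xinj i 0 h2 (by omega) heq; omega)
      yinj
      (fun i j hi1 hi2 hj1 hj2 heq => xinj i j hi2 hj2 heq)
      n1 hp1 n3 (symmDiff Y X)
    intro v
    rw [hZ v]
    constructor
    · rintro (⟨hv, hny⟩ | ⟨i, hi, rfl⟩)
      · exact Or.inr (Or.inl ⟨hv, hny⟩)
      · rcases Nat.eq_zero_or_pos i with h | h
        · subst h; exact Or.inl rfl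
        · exact Or.inr (Or.inr ⟨i, h, hi, rfl⟩)
    · rintro (h | ⟨hv, hny⟩ | ⟨i, h1, h2, h3⟩)
      · exact Or.inr ⟨0, by omega, h⟩
      · exact Or.inl ⟨hv, hny⟩
      · exact Or.inr ⟨i, h2, h3⟩
  · -- Ind₂
    apply exc_source h_empty₂ h_down₂ h_aug₂ M Y (xs M)
      (fun i => ys (M + 1 - i)) (fun i => xs (M - i))
      (h_down₂ (Finset.subset_insert _ _) hxM)
      (hmemx M le_rfl).2 hxM
      (fun i h1 h2 => (hmemy (M + 1 - i) (by omega) (by omega)).2)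
      (fun i h1 h2 => (hmemx (M - i) (by omega)).2)
      (fun i h1 h2 heq => by have := xinj (M - i) M (by omega) le_rfl heq; omega)
      (fun i j hi1 hi2 hj1 hj2 heq => by
        have := yinj (M + 1 - i) (M + 1 - j) (by omega) (by omega) (by omega) (by omega) heq
        omega)
      (fun i j hi1 hi2 hj1 hj2 heq => by
        have := xinj (M - i) (M - j) (by omega) (by omega) heq
        omega)
      (fun j h1 h2 => n2 (M - j) (by omega))
      (fun j h1 h2 => by
        have := hp2 (M + 1 - j) (by omega) (by omega)
        have e : M + 1 - j - 1 = M - j := by omega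
        rwa [e] at this)
      (fun i j h1 hij h2 => n4 (M - j) (M + 1 - i) (by omega) (by omega))
      (symmDiff Y X)
    intro v
    rw [hZ v]
    constructor
    · rintro (⟨hv, hny⟩ | ⟨i, hi, rfl⟩)
      · right; left
        refine ⟨hv, ?_⟩
        rintro ⟨i, h1, h2, h3⟩
        exact hny ⟨M + 1 - i, by omega, by omega, h3⟩
      · rcases Nat.eq_or_lt_of_le hi with h | h
        · subst h; exact Or.inl rfl
        · right; right
          refine ⟨M - i, by omega, by omega, ?_⟩
          have e : M - (M - i) = i := by omega
          rw [e]
    · rintro (h | ⟨hv, hny⟩ | ⟨i, h1, h2, h3⟩)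
      · exact Or.inr ⟨M, le_rfl, h⟩
      · left
        refine ⟨hv, ?_⟩
        rintro ⟨i, hi1, hi2, hi3⟩
        exact hny ⟨M + 1 - i, by omega, by omega, by rwa [show M + 1 - (M + 1 - i) = i by omega]⟩
      · exact Or.inr ⟨M - i, by omega, h3⟩
  · -- cardinality
    have hXdY : symmDiff Y X = (Y \ X) ∪ (X \ Y) := by
      rw [symmDiff_def]
      rfl
    have hXS_card : XS.card = M + 1 := by
      have hinj : Set.InjOn xs (Finset.range (M+1)) := by
        intro i hi j hj heq
        rw [Finset.mem_coe, Finset.mem_range] at hi hj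
        exact xinj i j (by omega) (by omega) heq
      rw [hXS, Finset.card_image_of_injOn hinj, Finset.card_range]
    have hYS_card : YS.card = M := by
      have hinj : Set.InjOn ys (Finset.Icc 1 M) := by
        intro i hi j hj heq
        rw [Finset.mem_coe, Finset.mem_Icc] at hi hj
        exact yinj i j hi.1 hi.2 hj.1 hj.2 heq
      rw [hYS, Finset.card_image_of_injOn hinj, Nat.card_Icc]
      omega
    have hYSY : YS ⊆ Y := by
      rw [hYS]
      intro v hv
      rw [Finset.mem_image] at hv
      obtain ⟨i, hi, rfl⟩ := hv
      rw [Finset.mem_Icc] at hi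
      exact (hmemy i hi.1 hi.2).2
    have h1 : X \ Y = XS := by
      ext v
      rw [Finset.mem_sdiff]
      constructor
      · rintro ⟨hvX, hvY⟩
        rcases Finset.mem_union.mp hvX with h | h
        · exact h
        · exact absurd (hYSY h) hvY
      · intro h
        refine ⟨Finset.mem_union_left _ h, ?_⟩
        rw [hXS, Finset.mem_image] at h
        obtain ⟨i, hi, rfl⟩ := h
        rw [Finset.mem_range] at hi
        exact (hmemx i (by omega)).2
    have h2 : Y \ X = Y \ YS := by
      ext v
      rw [Finset.mem_sdiff, Finset.mem_sdiff]
      constructor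
      · rintro ⟨hv, hnx⟩
        exact ⟨hv, fun h => hnx (Finset.mem_union_right _ h)⟩
      · rintro ⟨hv, hny⟩
        refine ⟨hv, fun h => ?_⟩
        rcases Finset.mem_union.mp h with h' | h'
        · rw [hXS, Finset.mem_image] at h'
          obtain ⟨i, hi, heq⟩ := h'
          rw [Finset.mem_range] at hi
          exact (hmemx i (by omega)).2 (heq ▸ hv)
        · exact hny h'
    have h3 : (Y \ YS).card = Y.card - M := by
      rw [Finset.card_sdiff_of_subset hYSY, hYS_card]
    have hMY : M ≤ Y.card := hYS_card ▸ Finset.card_le_card hYSY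
    rw [hXdY, Finset.card_union_of_disjoint (disjoint_sdiff_sdiff), h1, h2, h3,
      hXS_card]
    omega

end Stmt14Aux

/-- Let `Ind₁, Ind₂` be the independence families of two matroids
on a common ground set and let `Y, P` be common independent sets with
`|Y| ≤ |P|`. Then there exist pairwise disjoint subsets `X 1, …, X (|P|-|Y|)` of
`Y ∪ P` such that each `Y △ X i` is independent in both matroids and has
cardinality `|Y| + 1`. -/
theorem stmt_14 {α : Type*} [DecidableEq α]
    (Ind₁ Ind₂ : Finset α → Prop)
    (h_empty₁ : Ind₁ ∅)
    (h_down₁ : ∀ ⦃A B : Finset α⦄, A ⊆ B → Ind₁ B → Ind₁ A)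
    (h_aug₁ : ∀ ⦃A B : Finset α⦄, Ind₁ A → Ind₁ B → A.card < B.card →
      ∃ e ∈ B \ A, Ind₁ (insert e A))
    (h_empty₂ : Ind₂ ∅)
    (h_down₂ : ∀ ⦃A B : Finset α⦄, A ⊆ B → Ind₂ B → Ind₂ A)
    (h_aug₂ : ∀ ⦃A B : Finset α⦄, Ind₂ A → Ind₂ B → A.card < B.card →
      ∃ e ∈ B \ A, Ind₂ (insert e A))
    (Y P : Finset α) (hY₁ : Ind₁ Y) (hY₂ : Ind₂ Y) (hP₁ : Ind₁ P) (hP₂ : Ind₂ P)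
    (hcard : Y.card ≤ P.card) :
    ∃ X : Fin (P.card - Y.card) → Finset α,
      (∀ i, X i ⊆ Y ∪ P) ∧
      (∀ i j, i ≠ j → Disjoint (X i) (X j)) ∧
      (∀ i, Ind₁ (symmDiff Y (X i)) ∧ Ind₂ (symmDiff Y (X i)) ∧
        (symmDiff Y (X i)).card = Y.card + 1) := by
  classical
  set Q : Finset α := P \ Y with hQdef
  set R : Finset α := Y \ P with hRdef
  set D₁ : Finset α := Q.filter (fun x => ¬ Ind₁ (insert x Y)) with hD₁def
  set D₂ : Finset α := Q.filter (fun x => ¬ Ind₂ (insert x Y)) with hD₂def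
  have hD₁ : ∀ x, x ∈ D₁ ↔ (x ∈ P ∧ x ∉ Y ∧ ¬ Ind₁ (insert x Y)) := by
    intro x
    rw [hD₁def, Finset.mem_filter, hQdef, Finset.mem_sdiff]
    tauto
  have hD₂ : ∀ x, x ∈ D₂ ↔ (x ∈ P ∧ x ∉ Y ∧ ¬ Ind₂ (insert x Y)) := by
    intro x
    rw [hD₂def, Finset.mem_filter, hQdef, Finset.mem_sdiff]
    tauto
  obtain ⟨f₁, hf₁, hf₁inj⟩ :=
    Stmt14Aux.hall_exchange h_empty₁ h_down₁ h_aug₁ Y P hY₁ hP₁ D₁ hD₁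
  obtain ⟨f₂, hf₂, hf₂inj⟩ :=
    Stmt14Aux.hall_exchange h_empty₂ h_down₂ h_aug₂ Y P hY₂ hP₂ D₂ hD₂
  have hD₁Q : D₁ ⊆ Q := Finset.filter_subset _ _
  have hD₂Q : D₂ ⊆ Q := Finset.filter_subset _ _
  have hQP : Q ⊆ P := Finset.sdiff_subset
  have hQY : ∀ v ∈ Q, v ∉ Y := fun v hv => (Finset.mem_sdiff.mp hv).2
  have hk : R.card + (P.card - Y.card) ≤ Q.card := by
    have h1 : (P \ Y).card + (P ∩ Y).card = P.card := Finset.card_sdiff_add_card_inter P Y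
    have h2 : (Y \ P).card + (Y ∩ P).card = Y.card := Finset.card_sdiff_add_card_inter Y P
    have h3 : (P ∩ Y).card = (Y ∩ P).card := by rw [Finset.inter_comm]
    rw [hQdef, hRdef]
    omega
  obtain ⟨x, m, hx0, hxQ, hxm, hstep, hinjx, hcross⟩ :=
    Stmt14Aux.orbit_paths Q R D₁ D₂ f₁ f₂ (P.card - Y.card) hD₁Q hD₂Q
      (fun v hv => Finset.mem_sdiff.mpr ⟨(hf₁ v hv).1.1, (hf₁ v hv).1.2⟩)
      (fun v hv v' hv' h => hf₁inj v hv v' hv' h)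
      (fun v hv => Finset.mem_sdiff.mpr ⟨(hf₂ v hv).1.1, (hf₂ v hv).1.2⟩)
      (fun v hv v' hv' h => hf₂inj v hv v' hv' h)
      hk
  set W : Fin (P.card - Y.card) → Finset α := fun a =>
    ((Finset.range (m a + 1)).image (x a)) ∪
      ((Finset.range (m a)).image (fun i => f₂ (x a i))) with hW
  have hxD₂ : ∀ a, ∀ i, i < m a → x a i ∈ D₂ := fun a i hi => (hstep a i hi).1
  have hex : ∀ a, ∃ m' xs ys, Stmt14Aux.VS Ind₁ Ind₂ Y (W a) m' xs ys := by
    intro a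
    refine ⟨m a, x a, fun i => f₂ (x a (i - 1)), ?_, ?_, ?_, ?_, ?_, ?_⟩
    · intro i hi
      constructor
      · apply Finset.mem_union_left
        exact Finset.mem_image.mpr ⟨i, Finset.mem_range.mpr (by omega), rfl⟩
      · exact hQY _ (hxQ a i hi)
    · intro i h1 h2
      have hiD₂ : x a (i - 1) ∈ D₂ := hxD₂ a (i - 1) (by omega)
      constructor
      · apply Finset.mem_union_right
        exact Finset.mem_image.mpr ⟨i - 1, Finset.mem_range.mpr (by omega), rfl⟩
      · exact (hf₂ _ hiD₂).1.1
    · have h1 := hx0 a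
      have h2 := hxQ a 0 (by omega)
      by_contra hc
      exact h1 ((hD₁ _).mpr ⟨hQP h2, hQY _ h2, hc⟩)
    · have h1 := hxm a
      have h2 := hxQ a (m a) le_rfl
      by_contra hc
      exact h1 ((hD₂ _).mpr ⟨hQP h2, hQY _ h2, hc⟩)
    · intro i h1 h2
      show Ind₁ (insert (x a i) (Y.erase (f₂ (x a (i - 1)))))
      have hs := hstep a (i - 1) (by omega)
      have e : i - 1 + 1 = i := by omega
      rw [e] at hs
      rw [← hs.2.2]
      exact (hf₁ _ hs.2.1).2
    · intro i h1 h2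
      show Ind₂ (insert (x a (i - 1)) (Y.erase (f₂ (x a (i - 1)))))
      have hiD₂ : x a (i - 1) ∈ D₂ := hxD₂ a (i - 1) (by omega)
      exact (hf₂ _ hiD₂).2
  have haug := fun a => Stmt14Aux.augment h_empty₁ h_down₁ h_aug₁ h_empty₂ h_down₂ h_aug₂ (hex a)
  choose XX hXW hXi1 hXi2 hXc using haug
  have hWsub : ∀ a, W a ⊆ Y ∪ P := by
    intro a v hv
    rcases Finset.mem_union.mp hv with h | h
    · obtain ⟨i, hi, rfl⟩ := Finset.mem_image.mp h
      rw [Finset.mem_range] at hi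
      exact Finset.mem_union_right _ (hQP (hxQ a i (by omega)))
    · obtain ⟨i, hi, rfl⟩ := Finset.mem_image.mp h
      rw [Finset.mem_range] at hi
      exact Finset.mem_union_left _ ((hf₂ _ (hxD₂ a i hi)).1.1)
  have hWdisj : ∀ a b, a ≠ b → ∀ v, v ∈ W a → v ∈ W b → False := by
    intro a b hab v hva hvb
    rcases Finset.mem_union.mp hva with h | h <;>
      obtain ⟨i, hi, hieq⟩ := Finset.mem_image.mp h <;>
      rw [Finset.mem_range] at hi <;>
      rcases Finset.mem_union.mp hvb with h' | h' <;>
      obtain ⟨j, hj, hjeq⟩ := Finset.mem_image.mp h' <;>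
      rw [Finset.mem_range] at hj
    · exact hcross a b hab i (by omega) j (by omega) (hieq.trans hjeq.symm)
    · -- x a i = f₂ (x b j) : left ∉ Y, right ∈ Y
      have h1 : v ∉ Y := hQY _ (hieq ▸ hxQ a i (by omega))
      exact h1 (hjeq ▸ (hf₂ _ (hxD₂ b j hj)).1.1)
    · have h1 : v ∉ Y := hQY _ (hjeq ▸ hxQ b j (by omega))
      exact h1 (hieq ▸ (hf₂ _ (hxD₂ a i hi)).1.1)
    · -- f₂ (x a i) = f₂ (x b j)
      have := hf₂inj _ (hxD₂ a i hi) _ (hxD₂ b j hj) (hieq.trans hjeq.symm)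
      exact hcross a b hab i (by omega) j (by omega) this
  refine ⟨XX, ?_, ?_, fun a => ⟨hXi1 a, hXi2 a, hXc a⟩⟩
  · intro a
    exact (hXW a).trans (hWsub a)
  · intro a b hab
    rw [Finset.disjoint_left]
    intro v hva hvb
    exact hWdisj a b hab v (hXW a hva) (hXW b hvb)
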